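/- arXiv:1808.02253 — 2 statements merged into one kernel-verified Lean document; each statement's English description precedes it below -/
import Mathlib

section
/- Let n be a nonempty finite type, 0 < α < 1, A an n×n real matrix, and x₀ ∈ ℝ^n. Then for every t > 0 the trajectory x(s) = E_α(s^α • A) · x₀ is differentiable at t with derivative t⁻¹ • (E_{α,0}(t^α • A) · x₀); i.e., the map s ↦ E_α(s^α • A) · x₀ HasDerivAt t⁻¹ • (E_{α,0}(t^α • A) · x₀) at t. In particular, the tangent vector of the trajectory vanishes at time t if and only if E_{α,0}(t^α • A) · x₀ = 0. -/
/-- The two-parameter Mittag-Leffler matrix function `E_{α,β}(A) = ∑ A^k / Γ(αk+β)`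
of a real matrix, with `1/Γ` taken to be `0` at the poles of `Γ`. -/
noncomputable def mlMatR (α β : ℝ) {n : Type*} [Fintype n] [DecidableEq n]
    (A : Matrix n n ℝ) : Matrix n n ℝ :=
  ∑' k : ℕ, (Real.Gamma (α * k + β))⁻¹ • A ^ k



open Filter in
lemma aux_eventually_gamma (α β D : ℝ) (hα : 0 < α) (hD : 0 ≤ D) :
    ∀ᶠ k : ℕ in atTop, ((k : ℝ) + 1) * D ^ k ≤ Real.Gamma (α * k + β) := by
  set E : ℝ := (3 * (D + 1)) ^ (1 / α) with hEdef
  have h3D : (1:ℝ) < 3 * (D + 1) := by nlinarith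
  have hE1 : 1 < E := by
    rw [hEdef]
    exact Real.one_lt_rpow_iff_of_pos (by linarith) |>.mpr (Or.inl ⟨h3D, by positivity⟩)
  have hE0 : 0 < E := lt_trans one_pos hE1
  have hEα : E ^ α = 3 * (D + 1) := by
    rw [hEdef, ← Real.rpow_mul (by linarith), one_div, inv_mul_cancel₀ hα.ne', Real.rpow_one]
  -- eventual facts
  have h1 : Tendsto (fun k : ℕ => α * k + β - 1) atTop atTop := by
    have hb : Tendsto (fun k : ℕ => α * (k:ℝ)) atTop atTop :=
      (tendsto_natCast_atTop_atTop (R := ℝ)).const_mul_atTop hα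
    exact Filter.Tendsto.congr (fun k => by ring)
      (tendsto_atTop_add_const_right atTop (β - 1) hb)
  have hm : Tendsto (fun k : ℕ => ⌊α * k + β - 1⌋₊) atTop atTop :=
    tendsto_nat_floor_atTop.comp h1
  have hfact : ∀ᶠ m : ℕ in atTop, E ^ m ≤ (Nat.factorial m : ℝ) := by
    have := FloorSemiring.tendsto_pow_div_factorial_atTop E
    filter_upwards [this.eventually_lt_const one_pos, eventually_gt_atTop 0] with m h _
    have hf : (0:ℝ) < (Nat.factorial m : ℝ) := by positivity
    rw [div_lt_one hf] at h
    exact h.le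
  have h3 : ∀ᶠ k : ℕ in atTop, ((k:ℝ) + 1) * (1/3 : ℝ) ^ k ≤ E ^ (β - 2) := by
    have ht : Tendsto (fun k : ℕ => ((k:ℝ) + 1) * (1/3 : ℝ) ^ k) atTop (nhds 0) := by
      have h1' := tendsto_pow_const_mul_const_pow_of_abs_lt_one 1 (r := (1/3:ℝ))
        (by rw [abs_of_nonneg]; all_goals norm_num)
      have h0' := tendsto_pow_atTop_nhds_zero_of_lt_one (by norm_num : (0:ℝ) ≤ 1/3) (by norm_num)
      have := h1'.add h0'
      simp only [pow_one, add_zero] at this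
      convert this using 2 with k
      ring
    exact ht.eventually_le_const (by positivity)
  filter_upwards [hm.eventually hfact, h1.eventually_ge_atTop 2, h3] with k hEm h2k h3k
  set x : ℝ := α * k + β with hx
  set m : ℕ := ⌊x - 1⌋₊ with hmdef
  have hx1 : (2:ℝ) ≤ x - 1 := h2k
  have hx0 : (0:ℝ) ≤ x - 1 := by linarith
  have hm2 : 2 ≤ m := Nat.le_floor (by exact_mod_cast hx1)
  have hmle : (m : ℝ) ≤ x - 1 := Nat.floor_le hx0
  have hmgt : x - 2 < (m : ℝ) := by
    have := Nat.sub_one_lt_floor (x - 1)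
    rw [← hmdef] at this; linarith
  -- Gamma monotonicity
  have hΓ : (Nat.factorial m : ℝ) ≤ Real.Gamma x := by
    rw [← Real.Gamma_nat_eq_factorial]
    apply Real.Gamma_strictMonoOn_Ici.monotoneOn
    · simp only [Set.mem_Ici]
      have : (2:ℝ) ≤ m := by exact_mod_cast hm2
      linarith
    · simp only [Set.mem_Ici]; linarith
    · push_cast; linarith
  have hEx : E ^ (x - 2) ≤ E ^ m := by
    calc E ^ (x - 2) ≤ E ^ (m : ℝ) :=
          Real.rpow_le_rpow_of_exponent_le hE1.le (by linarith)
      _ = E ^ m := by rw [Real.rpow_natCast]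
  have hcomp : E ^ (x - 2) = (3 * (D + 1)) ^ k * E ^ (β - 2) := by
    have : x - 2 = α * k + (β - 2) := by rw [hx]; ring
    rw [this, Real.rpow_add hE0, ← hEα, ← Real.rpow_natCast (E ^ α) k,
      ← Real.rpow_mul hE0.le]
  have hfin : ((k:ℝ) + 1) * D ^ k ≤ (3 * (D + 1)) ^ k * E ^ (β - 2) := by
    have hk1 : ((k:ℝ) + 1) ≤ 3 ^ k * E ^ (β - 2) := by
      have := mul_le_mul_of_nonneg_right h3k (by positivity : (0:ℝ) ≤ 3 ^ k)
      calc ((k:ℝ) + 1) = ((k:ℝ) + 1) * (1/3)^k * 3^k := by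
            rw [mul_assoc, ← mul_pow]; norm_num
        _ ≤ E ^ (β - 2) * 3 ^ k := this
        _ = 3 ^ k * E ^ (β - 2) := mul_comm _ _
    calc ((k:ℝ) + 1) * D ^ k ≤ (3 ^ k * E ^ (β - 2)) * (D + 1) ^ k := by
          apply mul_le_mul hk1 (pow_le_pow_left₀ hD (by linarith) k) (by positivity) (by positivity)
      _ = (3 * (D + 1)) ^ k * E ^ (β - 2) := by rw [mul_pow]; ring
  calc ((k:ℝ) + 1) * D ^ k ≤ (3 * (D + 1)) ^ k * E ^ (β - 2) := hfin
    _ = E ^ (x - 2) := hcomp.symm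
    _ ≤ E ^ m := hEx
    _ ≤ (Nat.factorial m : ℝ) := hEm
    _ ≤ Real.Gamma x := hΓ

lemma aux_summable (α β C : ℝ) (hα : 0 < α) (hC : 0 ≤ C) :
    Summable (fun k : ℕ => ((k:ℝ) + 1) * |(Real.Gamma (α * k + β))⁻¹| * C ^ k) := by
  apply Summable.of_norm_bounded_eventually_nat (g := fun k => (1/2 : ℝ) ^ k)
    (summable_geometric_of_lt_one (by norm_num) (by norm_num))
  filter_upwards [aux_eventually_gamma α β (2 * (C + 1)) hα (by positivity)] with k hk
  have hpos : (0:ℝ) < ((k:ℝ) + 1) * (2 * (C + 1)) ^ k := by positivity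
  have hΓpos : (0:ℝ) < Real.Gamma (α * k + β) := lt_of_lt_of_le hpos hk
  rw [Real.norm_eq_abs, abs_of_nonneg (by positivity), abs_of_nonneg (inv_nonneg.mpr hΓpos.le)]
  calc ((k:ℝ) + 1) * (Real.Gamma (α * k + β))⁻¹ * C ^ k
      ≤ ((k:ℝ) + 1) * (((k:ℝ) + 1) * (2 * (C + 1)) ^ k)⁻¹ * C ^ k := by
        gcongr
    _ = (C / (2 * (C + 1))) ^ k := by
        rw [div_pow, mul_inv]
        field_simp
    _ ≤ (1/2 : ℝ) ^ k := by
        apply pow_le_pow_left₀ (by positivity)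
        rw [div_le_div_iff₀ (by positivity) (by norm_num)]
        linarith

section main
set_option maxHeartbeats 1000000
attribute [local instance] Matrix.linftyOpNormedRing Matrix.linftyOpNormedSpace

theorem trajectory_hasDerivAt {n : Type*} [Fintype n] [DecidableEq n] [Nonempty n]
    (α : ℝ) (hα0 : 0 < α) (hα1 : α < 1) (A : Matrix n n ℝ) (x₀ : n → ℝ)
    (t : ℝ) (ht : 0 < t) :
    HasDerivAt (fun s : ℝ => (mlMatR α 1 ((s ^ α) • A)).mulVec x₀)
      (t⁻¹ • ((mlMatR α 0 ((t ^ α) • A)).mulVec x₀)) t ∧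
    (t⁻¹ • ((mlMatR α 0 ((t ^ α) • A)).mulVec x₀) = 0 ↔
      (mlMatR α 0 ((t ^ α) • A)).mulVec x₀ = 0) := by
  constructor
  case right =>
    constructor
    · intro h
      rcases smul_eq_zero.mp h with h' | h'
      · exact absurd h' (inv_ne_zero ht.ne')
      · exact h'
    · intro h; rw [h, smul_zero]
  -- main part
  set w : ℕ → (n → ℝ) := fun k => (A ^ k).mulVec x₀ with hw
  set C0 : ℝ := ‖(1 : Matrix n n ℝ)‖ with hC0
  set B : ℝ := max 1 ‖A‖ with hB
  have hB1 : (1:ℝ) ≤ B := le_max_left _ _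
  have hB0 : (0:ℝ) ≤ B := by linarith
  have hC00 : 0 ≤ C0 := norm_nonneg _
  -- bound on powers
  have hpow : ∀ (M : Matrix n n ℝ) (k : ℕ), ‖M ^ k‖ ≤ C0 * (max 1 ‖M‖) ^ k := by
    intro M k
    induction k with
    | zero => simp [hC0]
    | succ k ih =>
        rw [pow_succ, pow_succ]
        calc ‖M ^ k * M‖ ≤ ‖M ^ k‖ * ‖M‖ := norm_mul_le _ _
          _ ≤ (C0 * max 1 ‖M‖ ^ k) * max 1 ‖M‖ := by
              gcongr
              · exact le_max_right _ _
          _ = C0 * (max 1 ‖M‖ ^ k * max 1 ‖M‖) := by ring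
  have hwbd : ∀ k : ℕ, ‖w k‖ ≤ C0 * B ^ k * ‖x₀‖ := by
    intro k
    calc ‖w k‖ ≤ ‖A ^ k‖ * ‖x₀‖ := Matrix.linfty_opNorm_mulVec _ _
      _ ≤ C0 * B ^ k * ‖x₀‖ := by gcongr; exact hpow A k
  -- mulVec as a continuous linear map
  set T : Matrix n n ℝ →L[ℝ] (n → ℝ) :=
    LinearMap.mkContinuous
      { toFun := fun M => M.mulVec x₀
        map_add' := fun M N => Matrix.add_mulVec M N x₀
        map_smul' := fun c M => (Matrix.smul_mulVec c M x₀) }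
      ‖x₀‖ (fun M => by rw [mul_comm]; exact Matrix.linfty_opNorm_mulVec M x₀) with hT
  have hTapp : ∀ M : Matrix n n ℝ, T M = M.mulVec x₀ := fun _ => rfl
  -- summability of the matrix series
  have hsumM : ∀ (β s : ℝ), 0 ≤ s →
      Summable (fun k : ℕ => (Real.Gamma (α * k + β))⁻¹ • ((s ^ α) • A) ^ k) := by
    intro β s hs
    apply Summable.of_norm_bounded
      (g := fun k : ℕ => C0 * (((k:ℝ) + 1) * |(Real.Gamma (α * k + β))⁻¹| * (max 1 ‖(s ^ α) • A‖) ^ k))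
      ((aux_summable α β _ hα0 (le_trans zero_le_one (le_max_left _ _))).mul_left C0)
    intro k
    rw [norm_smul, Real.norm_eq_abs]
    have h2 := hpow ((s ^ α) • A) k
    have h3 : (0:ℝ) ≤ |(Real.Gamma (α * k + β))⁻¹| := abs_nonneg _
    have h4 : (0:ℝ) ≤ (max 1 ‖(s ^ α) • A‖) ^ k := by positivity
    have hk0 : (0:ℝ) ≤ (k:ℝ) := Nat.cast_nonneg k
    nlinarith [mul_le_mul_of_nonneg_left h2 h3,
      mul_nonneg (mul_nonneg (mul_nonneg hC00 h3) h4) hk0]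
  -- the key series identity
  have hml : ∀ (β s : ℝ), 0 < s → (mlMatR α β ((s ^ α) • A)).mulVec x₀
      = ∑' k : ℕ, ((Real.Gamma (α * k + β))⁻¹ * s ^ (α * k)) • w k := by
    intro β s hs
    have h1 : (mlMatR α β ((s ^ α) • A)).mulVec x₀
        = T (∑' k : ℕ, (Real.Gamma (α * k + β))⁻¹ • ((s ^ α) • A) ^ k) := rfl
    rw [h1, T.map_tsum (hsumM β s hs.le)]
    refine tsum_congr fun k => ?_
    rw [map_smul, smul_pow, map_smul, hTapp, smul_smul, hw]
    congr 2
    rw [← Real.rpow_natCast (s ^ α) k, ← Real.rpow_mul hs.le]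
  -- setup for term-by-term differentiation
  set C : ℝ := (t + 1) ^ α * B with hCdef
  have ht1 : (0:ℝ) < t + 1 := by linarith
  have hC0' : (0:ℝ) ≤ C := mul_nonneg (Real.rpow_nonneg ht1.le α) hB0
  have hCpow : ∀ k : ℕ, C ^ k = ((t+1)^α)^k * B^k := fun k => by rw [hCdef, mul_pow]
  -- uniform bound for s^(α k)
  have hb1 : ∀ (s : ℝ), 0 ≤ s → s ≤ t + 1 → ∀ k : ℕ, s ^ (α * (k:ℝ)) ≤ ((t+1)^α)^k := by
    intro s hs hs' k
    calc s ^ (α * (k:ℝ)) ≤ (t+1) ^ (α * (k:ℝ)) :=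
          Real.rpow_le_rpow hs hs' (by positivity)
      _ = ((t+1)^α)^k := by rw [Real.rpow_mul ht1.le, Real.rpow_natCast]
  -- summability of the vector series
  have hsumv : ∀ (β' s : ℝ), 0 ≤ s → s ≤ t + 1 →
      Summable (fun k : ℕ => ((Real.Gamma (α * k + β'))⁻¹ * s ^ (α * k)) • w k) := by
    intro β' s hs hs'
    apply Summable.of_norm_bounded
      (g := fun k : ℕ => (C0 * ‖x₀‖) * (((k:ℝ) + 1) * |(Real.Gamma (α * k + β'))⁻¹| * C ^ k))
      ((aux_summable α β' C hα0 hC0').mul_left _)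
    intro k
    rw [norm_smul, Real.norm_eq_abs, abs_mul, abs_of_nonneg (Real.rpow_nonneg hs _)]
    have h3 : (0:ℝ) ≤ |(Real.Gamma (α * k + β'))⁻¹| := abs_nonneg _
    have h4 : (0:ℝ) ≤ ((t+1)^α)^k := by positivity
    have hk0 : (0:ℝ) ≤ (k:ℝ) := Nat.cast_nonneg k
    calc |(Real.Gamma (α * k + β'))⁻¹| * s ^ (α * (k:ℝ)) * ‖w k‖
        ≤ |(Real.Gamma (α * k + β'))⁻¹| * ((t+1)^α)^k * (C0 * B^k * ‖x₀‖) := by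
          apply mul_le_mul (mul_le_mul_of_nonneg_left (hb1 s hs hs' k) h3) (hwbd k)
            (norm_nonneg _) (mul_nonneg h3 h4)
      _ = (C0 * ‖x₀‖) * (1 * |(Real.Gamma (α * k + β'))⁻¹| * (((t+1)^α)^k * B^k)) := by
          ring
      _ ≤ (C0 * ‖x₀‖) * (((k:ℝ) + 1) * |(Real.Gamma (α * k + β'))⁻¹| * (((t+1)^α)^k * B^k)) := by
          apply mul_le_mul_of_nonneg_left _ (mul_nonneg hC00 (norm_nonneg x₀))
          exact mul_le_mul_of_nonneg_right
            (mul_le_mul_of_nonneg_right (by linarith) h3) (mul_nonneg h4 (pow_nonneg hB0 k))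
      _ = (C0 * ‖x₀‖) * (((k:ℝ) + 1) * |(Real.Gamma (α * k + β'))⁻¹| * C ^ k) := by
          rw [hCpow k]
  -- the summable bound for derivatives
  set u : ℕ → ℝ := fun k => (α * ((2/t) * (C0 * ‖x₀‖))) *
    (((k:ℝ) + 1) * |(Real.Gamma (α * k + 1))⁻¹| * C ^ k) with hu
  have hu_sum : Summable u := (aux_summable α 1 C hα0 hC0').mul_left _
  have htS : t ∈ Set.Ioo (t/2) (t+1) := ⟨by linarith, by linarith⟩
  -- termwise derivatives
  have hderiv : ∀ (k : ℕ) (s : ℝ), s ∈ Set.Ioo (t/2) (t+1) →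
      HasDerivAt (fun y : ℝ => ((Real.Gamma (α * k + 1))⁻¹ * y ^ (α * k)) • w k)
        (((Real.Gamma (α * k + 1))⁻¹ * (α * k * s ^ (α * k - 1))) • w k) s := by
    intro k s hs
    have hsp : (0:ℝ) < s := by have := hs.1; linarith
    exact ((Real.hasDerivAt_rpow_const (x := s) (p := α * k)
      (Or.inl hsp.ne')).const_mul ((Real.Gamma (α * k + 1))⁻¹)).smul_const (w k)
  -- bound on the derivatives
  have hbound : ∀ (k : ℕ) (s : ℝ), s ∈ Set.Ioo (t/2) (t+1) →
      ‖((Real.Gamma (α * k + 1))⁻¹ * (α * k * s ^ (α * k - 1))) • w k‖ ≤ u k := by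
    intro k s hs
    have hsp : (0:ℝ) < s := by have := hs.1; linarith
    have h3 : (0:ℝ) ≤ |(Real.Gamma (α * k + 1))⁻¹| := abs_nonneg _
    have h4 : (0:ℝ) ≤ ((t+1)^α)^k := by positivity
    have h2t : (0:ℝ) ≤ 2/t := by positivity
    have hk0 : (0:ℝ) ≤ (k:ℝ) := Nat.cast_nonneg k
    rw [norm_smul, Real.norm_eq_abs, abs_mul,
      abs_of_nonneg (by positivity : (0:ℝ) ≤ α * k * s ^ (α * (k:ℝ) - 1))]
    have e1 : s ^ (α * (k:ℝ) - 1) = s ^ (α * (k:ℝ)) * s⁻¹ := by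
      rw [Real.rpow_sub hsp, Real.rpow_one, div_eq_mul_inv]
    have b2 : s⁻¹ ≤ 2/t := by
      have := inv_anti₀ (by positivity : (0:ℝ) < t/2) hs.1.le
      rwa [inv_div] at this
    have hmid : α * (k:ℝ) * s ^ (α * (k:ℝ) - 1) ≤ α * ((k:ℝ)+1) * (((t+1)^α)^k * (2/t)) := by
      rw [e1]
      apply mul_le_mul (mul_le_mul_of_nonneg_left (by linarith) hα0.le)
        (mul_le_mul (hb1 s hsp.le (by linarith [hs.2]) k) b2 (inv_nonneg.mpr hsp.le) h4)
        (mul_nonneg (Real.rpow_nonneg hsp.le _) (inv_nonneg.mpr hsp.le)) (by positivity)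
    calc |(Real.Gamma (α * k + 1))⁻¹| * (α * k * s ^ (α * (k:ℝ) - 1)) * ‖w k‖
        ≤ |(Real.Gamma (α * k + 1))⁻¹| * (α * ((k:ℝ)+1) * (((t+1)^α)^k * (2/t)))
            * (C0 * B^k * ‖x₀‖) := by
          apply mul_le_mul (mul_le_mul_of_nonneg_left hmid h3) (hwbd k) (norm_nonneg _)
          exact mul_nonneg h3 (mul_nonneg (by positivity)
            (mul_nonneg h4 h2t))
      _ = u k := by simp only [hu, hCpow k]; ring
  -- the derivative of the series
  have hD : HasDerivAt
      (fun s : ℝ => ∑' k : ℕ, ((Real.Gamma (α * k + 1))⁻¹ * s ^ (α * k)) • w k)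
      (∑' k : ℕ, ((Real.Gamma (α * k + 1))⁻¹ * (α * k * t ^ (α * k - 1))) • w k) t :=
    hasDerivAt_tsum_of_isPreconnected hu_sum isOpen_Ioo isPreconnected_Ioo
      hderiv hbound htS (hsumv 1 t ht.le (by linarith)) htS
  -- transfer to the original function
  have heq : (fun s : ℝ => (mlMatR α 1 ((s ^ α) • A)).mulVec x₀)
      =ᶠ[nhds t] (fun s : ℝ => ∑' k : ℕ, ((Real.Gamma (α * k + 1))⁻¹ * s ^ (α * k)) • w k) := by
    filter_upwards [Ioi_mem_nhds ht] with s hs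
    exact hml 1 s hs
  have hD2 : HasDerivAt (fun s : ℝ => (mlMatR α 1 ((s ^ α) • A)).mulVec x₀)
      (∑' k : ℕ, ((Real.Gamma (α * k + 1))⁻¹ * (α * k * t ^ (α * k - 1))) • w k) t :=
    hD.congr_of_eventuallyEq heq
  -- identify the derivative with the claimed formula
  have hid : (∑' k : ℕ, ((Real.Gamma (α * k + 1))⁻¹ * (α * k * t ^ (α * k - 1))) • w k)
      = t⁻¹ • ((mlMatR α 0 ((t ^ α) • A)).mulVec x₀) := by
    rw [hml 0 t ht, ← Summable.tsum_const_smul _ (hsumv 0 t ht.le (by linarith))]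
    refine tsum_congr fun k => ?_
    rw [smul_smul]
    congr 1
    by_cases hk : k = 0
    · subst hk
      simp [Real.Gamma_zero]
    · have hkpos : (0:ℝ) < (k:ℝ) := by exact_mod_cast Nat.pos_of_ne_zero hk
      have hx : (0:ℝ) < α * k := by positivity
      have hG : Real.Gamma (α * k) ≠ 0 := (Real.Gamma_pos_of_pos hx).ne'
      rw [add_zero, Real.Gamma_add_one hx.ne']
      rw [Real.rpow_sub ht, Real.rpow_one]
      field_simp
  rw [← hid]
  exact hD2

end main
end

section
/- Let n be a nonempty finite type, 0 < α < 1, T > 0, and A an n×n real matrix with complexification A_ℂ. Then there exists a nonzero x₀ ∈ ℝ^n with E_{α,0}(T^α • A) · x₀ = 0 (i.e., a trajectory has a multiple point at time T) if and only if there exists an eigenvalue λ ∈ spectrum ℂ A_ℂ with E_{α,0}(T^α λ) = 0 (i.e., λ = η / T^α for some zero η of E_{α,0}). -/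
/-- The two-parameter Mittag-Leffler function `E_{α,β}(z) = ∑ z^k / Γ(αk+β)`,
with `1/Γ` taken to be `0` at the poles of `Γ`. -/
noncomputable def mlE (α β : ℝ) (z : ℂ) : ℂ :=
  ∑' k : ℕ, ((Real.Gamma (α * k + β) : ℂ))⁻¹ * z ^ k

theorem mlGammaBound (q x : ℝ) (hq : 1 ≤ q) (hx : 2 ≤ x) :
    (Real.Gamma x)⁻¹ ≤ (∑' m : ℕ, q ^ m / m.factorial) * q ^ (2 - x) := by
  have hq0 : (0:ℝ) < q := by linarith
  set m := ⌊x⌋₊ with hm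
  have hm2 : 2 ≤ m := Nat.le_floor (by exact_mod_cast hx)
  have hxm : (m:ℝ) ≤ x := Nat.floor_le (by linarith)
  have hxm1 : x < m + 1 := Nat.lt_floor_add_one x
  have hΓ : Real.Gamma m ≤ Real.Gamma x := by
    rcases eq_or_lt_of_le hxm with h | h
    · rw [h]
    · exact le_of_lt (Real.Gamma_strictMonoOn_Ici (Set.mem_Ici.mpr (by exact_mod_cast hm2)) (Set.mem_Ici.mpr hx) h)
  have hfac : Real.Gamma m = ((m-1).factorial : ℝ) := by
    have : ((m:ℝ)) = ((m-1 : ℕ) : ℝ) + 1 := by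
      have : 1 ≤ m := by omega
      push_cast [Nat.cast_sub this]
      ring
    rw [this, Real.Gamma_nat_eq_factorial]
  have hfacpos : (0:ℝ) < ((m-1).factorial : ℝ) := by positivity
  have h1 : (Real.Gamma x)⁻¹ ≤ (((m-1).factorial : ℝ))⁻¹ := by
    apply inv_anti₀ hfacpos
    rw [← hfac]; exact hΓ
  have hC : q ^ (m-1) / ((m-1).factorial : ℝ) ≤ ∑' m : ℕ, q ^ m / m.factorial :=
    Summable.le_tsum (Real.summable_pow_div_factorial q) (m-1) (fun n _ => by positivity)
  have h2 : (((m-1).factorial : ℝ))⁻¹ ≤ (∑' m : ℕ, q ^ m / m.factorial) / q ^ (m-1) := by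
    rw [le_div_iff₀ (by positivity)]
    calc (((m-1).factorial : ℝ))⁻¹ * q ^ (m-1) = q ^ (m-1) / ((m-1).factorial : ℝ) := by ring
    _ ≤ _ := hC
  have hC0 : (0:ℝ) ≤ ∑' m : ℕ, q ^ m / m.factorial := tsum_nonneg (fun n => by positivity)
  have h3 : (q:ℝ) ^ (x - 2) ≤ q ^ ((m-1 : ℕ) : ℝ) :=
    Real.rpow_le_rpow_of_exponent_le hq (by push_cast [Nat.cast_sub (by omega : 1 ≤ m)]; linarith)
  have h4 : (∑' m : ℕ, q ^ m / m.factorial) / q ^ (m-1) ≤ (∑' m : ℕ, q ^ m / m.factorial) * q ^ (2 - x) := by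
    rw [div_le_iff₀ (by positivity)]
    have : (q:ℝ) ^ (2 - x) * q ^ ((m-1:ℕ):ℝ) ≥ q ^ (2-x) * q ^ (x - 2) := by
      apply mul_le_mul_of_nonneg_left h3 (by positivity)
    have he : (q:ℝ) ^ (2 - x) * q ^ (x - 2) = 1 := by
      rw [← Real.rpow_add hq0]; simp
    calc (∑' m : ℕ, q ^ m / m.factorial)
        = (∑' m : ℕ, q ^ m / m.factorial) * 1 := by ring
      _ ≤ (∑' m : ℕ, q ^ m / m.factorial) * (q ^ (2-x) * q ^ ((m-1:ℕ):ℝ)) := by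
          apply mul_le_mul_of_nonneg_left _ hC0
          rw [← he]; exact this
      _ = (∑' m : ℕ, q ^ m / m.factorial) * q ^ (2-x) * q ^ ((m-1:ℕ):ℝ) := by ring
      _ = (∑' m : ℕ, q ^ m / m.factorial) * q ^ (2-x) * q ^ ((m-1:ℕ)) := by
          rw [Real.rpow_natCast]
  exact h1.trans (h2.trans h4)

theorem mlSummable (α : ℝ) (hα : 0 < α) (r : ℝ) (hr : 0 ≤ r) :
    Summable (fun k : ℕ => (Real.Gamma (α * k))⁻¹ * r ^ k) := by
  set q : ℝ := (2*r+1) ^ (α⁻¹ : ℝ) with hqdef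
  have h2r1 : (1:ℝ) ≤ 2*r+1 := by linarith
  have hq1 : (1:ℝ) ≤ q := Real.one_le_rpow h2r1 (by positivity)
  have hq0 : (0:ℝ) < q := by linarith
  have hqα : q ^ (α:ℝ) = 2*r+1 := by
    rw [hqdef, ← Real.rpow_mul (by linarith), inv_mul_cancel₀ (ne_of_gt hα), Real.rpow_one]
  set C : ℝ := ∑' m : ℕ, q ^ m / m.factorial with hCdef
  have hC0 : (0:ℝ) ≤ C := tsum_nonneg (fun n => by positivity)
  set N : ℕ := ⌈2/α⌉₊ with hNdef
  have hN : (2:ℝ) ≤ α * N := by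
    have h1 : (2/α : ℝ) ≤ N := Nat.le_ceil _
    calc (2:ℝ) = α * (2/α) := by field_simp
    _ ≤ α * N := by apply mul_le_mul_of_nonneg_left h1 (le_of_lt hα)
  rw [← summable_nat_add_iff N]
  have hratio : r / (2*r+1) < 1 := by
    rw [div_lt_one (by linarith)]; linarith
  have hratio0 : 0 ≤ r / (2*r+1) := by positivity
  apply Summable.of_nonneg_of_le (fun k => ?_) (fun k => ?_)
    (((summable_geometric_of_lt_one hratio0 hratio).mul_left (C * q^(2:ℝ) * r^N)))
  · have hΓpos : 0 < Real.Gamma (α * (k + N)) := Real.Gamma_pos_of_pos (by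
      push_cast; nlinarith [hN, mul_nonneg (le_of_lt hα) (Nat.cast_nonneg k)])
    positivity
  · set x : ℝ := α * ((k + N : ℕ) : ℝ) with hxdef
    have hx2 : (2:ℝ) ≤ x := by
      rw [hxdef]; push_cast
      nlinarith [mul_nonneg (le_of_lt hα) (Nat.cast_nonneg k)]
    have hb := mlGammaBound q x hq1 hx2
    have hrpow : (0:ℝ) ≤ r ^ (k + N) := by positivity
    calc (Real.Gamma x)⁻¹ * r ^ (k+N)
        ≤ (C * q ^ (2 - x)) * r ^ (k+N) := mul_le_mul_of_nonneg_right hb hrpow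
      _ = C * q^(2:ℝ) * (q ^ x)⁻¹ * r^(k+N) := by
          rw [Real.rpow_sub hq0]; ring
      _ = C * q^(2:ℝ) * ((2*r+1) ^ (k+N))⁻¹ * r^(k+N) := by
          rw [hxdef, Real.rpow_mul (le_of_lt hq0), hqα, ← Real.rpow_natCast (2*r+1) (k+N)]
      _ = C * q^(2:ℝ) * (r^(k+N) / (2*r+1)^(k+N)) := by ring
      _ ≤ C * q^(2:ℝ) * (r^N * (r / (2*r+1))^k) := by
          apply mul_le_mul_of_nonneg_left _ (by positivity)
          have h2 : ((2*r+1):ℝ)^k ≤ (2*r+1)^(k+N) := by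
            apply pow_le_pow_right₀ h2r1 (Nat.le_add_right k N)
          calc r^(k+N) / (2*r+1)^(k+N) ≤ r^(k+N) / (2*r+1)^k := by
                apply div_le_div_of_nonneg_left (by positivity) (by positivity) h2
            _ = r^N * (r / (2*r+1))^k := by rw [pow_add, div_pow]; ring
      _ = C * q^(2:ℝ) * r^N * (r / (2*r+1))^k := by ring

section Matrices

open Matrix Complex

attribute [local instance] Matrix.linftyOpNormedAddCommGroup Matrix.linftyOpNormedRing
  Matrix.linftyOpNormedAlgebra Matrix.linftyOpNormedSpace

variable {n : Type*} [Fintype n] [DecidableEq n] [Nonempty n]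

theorem gamma_inv_nonneg (x : ℝ) (hx : 0 ≤ x) : 0 ≤ (Real.Gamma x)⁻¹ := by
  rcases eq_or_lt_of_le hx with h | h
  · rw [← h, Real.Gamma_zero]; norm_num
  · exact le_of_lt (by positivity)

theorem summable_matC (α : ℝ) (hα : 0 < α) (M : Matrix n n ℂ) :
    Summable (fun k : ℕ => ((Real.Gamma (α * k + 0) : ℂ))⁻¹ • M ^ k) := by
  apply Summable.of_norm
  apply Summable.of_nonneg_of_le (fun k => norm_nonneg _) (fun k => ?_)
    (mlSummable α hα ‖M‖ (norm_nonneg M))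
  rw [norm_smul]
  have h1 : ‖((Real.Gamma (α * k + 0) : ℂ))⁻¹‖ = (Real.Gamma (α * k))⁻¹ := by
    rw [add_zero, norm_inv, Complex.norm_real, Real.norm_eq_abs,
      _root_.abs_of_nonneg (Real.Gamma_nonneg_of_nonneg (by positivity))]
  rw [h1]
  exact mul_le_mul_of_nonneg_left (norm_pow_le M k)
    (gamma_inv_nonneg _ (by positivity))

theorem summable_matR (α : ℝ) (hα : 0 < α) (B : Matrix n n ℝ) :
    Summable (fun k : ℕ => (Real.Gamma (α * k + 0))⁻¹ • B ^ k) := by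
  apply Summable.of_norm
  apply Summable.of_nonneg_of_le (fun k => norm_nonneg _) (fun k => ?_)
    (mlSummable α hα ‖B‖ (norm_nonneg B))
  rw [norm_smul, add_zero, Real.norm_eq_abs,
    _root_.abs_of_nonneg (gamma_inv_nonneg _ (by positivity))]
  exact mul_le_mul_of_nonneg_left (norm_pow_le B k)
    (gamma_inv_nonneg _ (by positivity))

theorem summable_scalar (α : ℝ) (hα : 0 < α) (z : ℂ) :
    Summable (fun k : ℕ => ((Real.Gamma (α * k + 0) : ℂ))⁻¹ * z ^ k) := by
  apply Summable.of_norm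
  apply Summable.of_nonneg_of_le (fun k => norm_nonneg _) (fun k => ?_)
    (mlSummable α hα ‖z‖ (norm_nonneg z))
  rw [norm_mul, norm_inv, Complex.norm_real, Real.norm_eq_abs, add_zero,
    _root_.abs_of_nonneg (Real.Gamma_nonneg_of_nonneg (by positivity)), norm_pow]

theorem tsum_mulVec {f : ℕ → Matrix n n ℂ} (hf : Summable f) (v : n → ℂ) :
    (∑' k, f k).mulVec v = ∑' k, (f k).mulVec v := by
  let φ : Matrix n n ℂ →ₗ[ℂ] (n → ℂ) :=
    { toFun := fun B => B.mulVec v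
      map_add' := fun B C => Matrix.add_mulVec B C v
      map_smul' := fun c B => Matrix.smul_mulVec c B v }
  have hc : Continuous φ := φ.continuous_of_finiteDimensional
  exact ContinuousLinearMap.map_tsum ⟨φ, hc⟩ hf

theorem tsum_mapR {f : ℕ → Matrix n n ℝ} (hf : Summable f) :
    (∑' k, f k).map (Complex.ofReal) = ∑' k, (f k).map Complex.ofReal := by
  let φ : Matrix n n ℝ →ₗ[ℝ] Matrix n n ℂ :=
    { toFun := fun B => B.map Complex.ofReal
      map_add' := fun B C => by ext i j; simp [Matrix.map_apply]
      map_smul' := fun c B => by ext i j; simp [Matrix.map_apply] }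
  have hc : Continuous φ := φ.continuous_of_finiteDimensional
  exact ContinuousLinearMap.map_tsum ⟨φ, hc⟩ hf

/-- The complex Mittag-Leffler matrix series. -/
noncomputable def mlMatC (α : ℝ) (M : Matrix n n ℂ) : Matrix n n ℂ :=
  ∑' k : ℕ, ((Real.Gamma (α * k + 0) : ℂ))⁻¹ • M ^ k

theorem mlMatC_eq_map (α : ℝ) (hα : 0 < α) (B : Matrix n n ℝ) :
    (mlMatR α 0 B).map Complex.ofReal = mlMatC α (B.map Complex.ofReal) := by
  rw [mlMatR, mlMatC, tsum_mapR (summable_matR α hα B)]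
  congr 1
  funext k
  have : (B ^ k).map Complex.ofReal = (B.map Complex.ofReal) ^ k := by
    have h := map_pow ((Complex.ofRealHom.mapMatrix : Matrix n n ℝ →+* Matrix n n ℂ)) B k
    simp [RingHom.mapMatrix_apply] at h; exact h
  ext i j
  simp [Matrix.map_apply, Matrix.smul_apply, ← this]

theorem mlMatC_mulVec_eig (α : ℝ) (hα : 0 < α) (M : Matrix n n ℂ) {μ : ℂ} {v : n → ℂ}
    (hv : M.mulVec v = μ • v) :
    (mlMatC α M).mulVec v = mlE α 0 μ • v := by
  rw [mlMatC, tsum_mulVec (summable_matC α hα M) v]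
  have hk : ∀ k : ℕ, (M ^ k).mulVec v = μ ^ k • v := by
    intro k
    induction k with
    | zero => simp
    | succ k ih =>
        rw [pow_succ', pow_succ', ← Matrix.mulVec_mulVec, ih, Matrix.mulVec_smul, hv,
          smul_smul, mul_comm]
  calc (∑' k : ℕ, (((Real.Gamma (α * k + 0) : ℂ))⁻¹ • M ^ k).mulVec v)
      = ∑' k : ℕ, (((Real.Gamma (α * k + 0) : ℂ))⁻¹ * μ ^ k) • v := by
        congr 1; funext k
        rw [Matrix.smul_mulVec, hk, smul_smul]
    _ = (∑' k : ℕ, ((Real.Gamma (α * k + 0) : ℂ))⁻¹ * μ ^ k) • v :=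
        Summable.tsum_smul_const (summable_scalar α hα μ) v
    _ = mlE α 0 μ • v := rfl

theorem mlMatC_comm (α : ℝ) (hα : 0 < α) (M : Matrix n n ℂ) :
    mlMatC α M * M = M * mlMatC α M := by
  rw [mlMatC, ← Summable.tsum_mul_right M (summable_matC α hα M),
    ← Summable.tsum_mul_left M (summable_matC α hα M)]
  congr 1; funext k
  rw [Matrix.smul_mul, Matrix.mul_smul, ← pow_succ, ← pow_succ']

theorem mlMatC_singular_iff (α : ℝ) (hα : 0 < α) (M : Matrix n n ℂ) :
    (∃ v : n → ℂ, v ≠ 0 ∧ (mlMatC α M).mulVec v = 0) ↔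
      ∃ μ ∈ spectrum ℂ M, mlE α 0 μ = 0 := by
  constructor
  · rintro ⟨v, hv0, hv⟩
    set K := LinearMap.ker (Matrix.toLinAlgEquiv' (mlMatC α M)) with hK
    have hvK : v ∈ K := by
      rw [hK, LinearMap.mem_ker, Matrix.toLinAlgEquiv'_apply, hv]
    have hKnt : Nontrivial K := ⟨⟨⟨v, hvK⟩, 0, by simp [Subtype.ext_iff, hv0]⟩⟩
    have hmaps : ∀ u ∈ K, (Matrix.toLinAlgEquiv' M) u ∈ K := by
      intro u hu
      rw [LinearMap.mem_ker, Matrix.toLinAlgEquiv'_apply] at hu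
      rw [LinearMap.mem_ker, Matrix.toLinAlgEquiv'_apply, Matrix.toLinAlgEquiv'_apply,
        Matrix.mulVec_mulVec, mlMatC_comm α hα M, ← Matrix.mulVec_mulVec, hu,
        Matrix.mulVec_zero]
    let g' := (Matrix.toLinAlgEquiv' M).restrict hmaps
    obtain ⟨μ, hμ⟩ := Module.End.exists_eigenvalue g'
    obtain ⟨w', hw'⟩ := hμ.exists_hasEigenvector
    have hw0 : (w' : n → ℂ) ≠ 0 := fun h => hw'.right (by exact_mod_cast Subtype.ext h)
    have hgw : M.mulVec (w' : n → ℂ) = μ • (w' : n → ℂ) := by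
      have h1 := hw'.apply_eq_smul
      have h2 := congrArg (Subtype.val) h1
      rw [LinearMap.restrict_apply] at h2
      simpa [Matrix.toLinAlgEquiv'_apply] using h2
    have hEw : (mlMatC α M).mulVec (w' : n → ℂ) = 0 := by
      have h3 := w'.2
      simp only [hK, LinearMap.mem_ker, Matrix.toLinAlgEquiv'_apply] at h3
      exact h3
    have h4 := mlMatC_mulVec_eig α hα M hgw
    rw [hEw] at h4
    have hml : mlE α 0 μ = 0 := by
      rcases smul_eq_zero.mp h4.symm with h | h
      · exact h
      · exact absurd h hw0
    refine ⟨μ, ?_, hml⟩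
    have heig : Module.End.HasEigenvalue (Matrix.toLinAlgEquiv' M) μ :=
      Module.End.hasEigenvalue_of_hasEigenvector
        ⟨Module.End.mem_eigenspace_iff.mpr
          (by rw [Matrix.toLinAlgEquiv'_apply]; exact hgw), hw0⟩
    have h5 := Module.End.hasEigenvalue_iff_mem_spectrum.mp heig
    rwa [AlgEquiv.spectrum_eq Matrix.toLinAlgEquiv'] at h5
  · rintro ⟨μ, hμ, hml⟩
    have heig : Module.End.HasEigenvalue (Matrix.toLinAlgEquiv' M) μ := by
      apply Module.End.hasEigenvalue_iff_mem_spectrum.mpr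
      rwa [AlgEquiv.spectrum_eq Matrix.toLinAlgEquiv' M]
    obtain ⟨w, hw⟩ := heig.exists_hasEigenvector
    have hgw : M.mulVec w = μ • w := by
      have h1 := hw.apply_eq_smul
      rwa [Matrix.toLinAlgEquiv'_apply] at h1
    exact ⟨w, hw.right, by rw [mlMatC_mulVec_eig α hα M hgw, hml, zero_smul]⟩

end Matrices

open Pointwise in
theorem multiple_point_iff {n : Type*} [Fintype n] [DecidableEq n] [Nonempty n]
    (α : ℝ) (hα0 : 0 < α) (hα1 : α < 1) (T : ℝ) (hT : 0 < T) (A : Matrix n n ℝ) :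
    (∃ x₀ : n → ℝ, x₀ ≠ 0 ∧ (mlMatR α 0 ((T ^ α) • A)).mulVec x₀ = 0) ↔
      ∃ lam ∈ spectrum ℂ (A.map Complex.ofReal),
        mlE α 0 (((T ^ α : ℝ) : ℂ) * lam) = 0 := by
  have hTα : (0:ℝ) < T ^ α := Real.rpow_pos_of_pos hT α
  have hc : ((T ^ α : ℝ) : ℂ) ≠ 0 := by exact_mod_cast ne_of_gt hTα
  have hMc : ((T ^ α • A : Matrix n n ℝ)).map Complex.ofReal
      = ((T ^ α : ℝ) : ℂ) • A.map Complex.ofReal := by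
    ext i j
    simp [Matrix.map_apply, Matrix.smul_apply]
  have hdet : (∃ x₀ : n → ℝ, x₀ ≠ 0 ∧ (mlMatR α 0 ((T ^ α) • A)).mulVec x₀ = 0)
      ↔ ∃ v : n → ℂ, v ≠ 0 ∧
          (mlMatC α (((T ^ α • A : Matrix n n ℝ)).map Complex.ofReal)).mulVec v = 0 := by
    rw [Matrix.exists_mulVec_eq_zero_iff, Matrix.exists_mulVec_eq_zero_iff,
      ← mlMatC_eq_map α hα0]
    have hdd := Complex.ofRealHom.map_det (mlMatR α 0 ((T ^ α) • A))
    rw [RingHom.mapMatrix_apply] at hdd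
    have hmm : (mlMatR α 0 ((T ^ α) • A)).map Complex.ofReal
        = (mlMatR α 0 ((T ^ α) • A)).map Complex.ofRealHom := rfl
    rw [hmm, ← hdd]
    constructor
    · intro h
      rw [h]
      exact map_zero _
    · intro h
      have : Complex.ofRealHom (mlMatR α 0 ((T ^ α) • A)).det = 0 := h
      exact Complex.ofReal_eq_zero.mp this
  rw [hdet, mlMatC_singular_iff α hα0, hMc]
  have hspec : spectrum ℂ (((T ^ α : ℝ) : ℂ) • A.map Complex.ofReal)
      = (Units.mk0 _ hc : ℂˣ) • spectrum ℂ (A.map Complex.ofReal) := by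
    rw [← spectrum.unit_smul_eq_smul (A.map Complex.ofReal) (Units.mk0 _ hc)]
    rfl
  rw [hspec]
  constructor
  · rintro ⟨μ, hμ, hml⟩
    rw [Set.mem_smul_set] at hμ
    obtain ⟨lam, hlam, rfl⟩ := hμ
    refine ⟨lam, hlam, ?_⟩
    rwa [Units.smul_def, smul_eq_mul] at hml
  · rintro ⟨lam, hlam, hml⟩
    refine ⟨((T ^ α : ℝ) : ℂ) * lam, ?_, hml⟩
    rw [Set.mem_smul_set]
    exact ⟨lam, hlam, by rw [Units.smul_def, smul_eq_mul]; rfl⟩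
end
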